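/- arXiv:1512.03174 — 8 statements merged into one kernel-verified Lean document; each statement's English description precedes it below -/
import Mathlib

section
/- (STi) Let X be a topological space and F: X → X a strongly transitive map. If S ⊆ X is nonempty and backward invariant, i.e. F⁻¹(S) ⊆ S, then S is dense in X. -/
/-- F is strongly transitive: every nonempty open set covers the whole space
in finitely many forward iterates. -/
def StronglyTransitive {X : Type*} [TopologicalSpace X] (F : X → X) : Prop :=
  ∀ D : Set X, IsOpen D → D.Nonempty →
    ∃ N : ℕ, (⋃ n ∈ Finset.Icc 1 N, F^[n] '' D) = Set.univ

/-- **(STi)** A nonempty backward-invariant set of a strongly transitive map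
is dense. -/
theorem dense_of_backward_invariant {X : Type*} [TopologicalSpace X]
    (F : X → X) (hF : StronglyTransitive F)
    (S : Set X) (hS : S.Nonempty) (hinv : F ⁻¹' S ⊆ S) :
    Dense S := by
  rw [dense_iff_inter_open]
  intro D hD hDne
  obtain ⟨x, hx⟩ := hS
  obtain ⟨N, hN⟩ := hF D hD hDne
  have hxU : x ∈ ⋃ n ∈ Finset.Icc 1 N, F^[n] '' D := by rw [hN]; trivial
  simp only [Set.mem_iUnion, Set.mem_image] at hxU
  obtain ⟨n, _, y, hyD, hyx⟩ := hxU
  have key : ∀ m : ℕ, ∀ z : X, F^[m] z ∈ S → z ∈ S := by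
    intro m
    induction m with
    | zero => intro z hz; simpa using hz
    | succ k ih =>
      intro z hz
      rw [Function.iterate_succ_apply] at hz
      exact hinv (ih (F z) hz)
  exact ⟨y, hyD, key n y (hyx ▸ hx)⟩
end

section
/- (Generalization of STii) Let X be a nonempty compact metric space, F: X → X a continuous, strongly transitive map, and (U_j)_{j≥0} any sequence of nonempty open subsets of X. Then there exist a point x₀ ∈ X and a strictly increasing sequence of natural numbers (m_j)_{j≥0} such that F^{m_j}(x₀) lies in the closure of U_j for every j. -/
lemma st_helper {X : Type*} [TopologicalSpace X] {F : X → X}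
    (hF : StronglyTransitive F) {D U : Set X} (hD : IsOpen D)
    (hDne : D.Nonempty) (hUne : U.Nonempty) :
    ∃ n, 1 ≤ n ∧ (D ∩ F^[n] ⁻¹' U).Nonempty := by
  obtain ⟨N, hN⟩ := hF D hD hDne
  obtain ⟨y, hy⟩ := hUne
  have hmem : y ∈ (⋃ n ∈ Finset.Icc 1 N, F^[n] '' D) := hN ▸ Set.mem_univ y
  simp only [Set.mem_iUnion] at hmem
  obtain ⟨n, hn, z, hz, hzy⟩ := hmem
  exact ⟨n, (Finset.mem_Icc.mp hn).1, z, hz, by simp [Set.mem_preimage, hzy, hy]⟩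

lemma st_key {X : Type*} [TopologicalSpace X] {F : X → X}
    (hFc : Continuous F) (hF : StronglyTransitive F) {U : Set X}
    (hU : IsOpen U) (hUne : U.Nonempty) :
    ∀ M : ℕ, ∀ D : Set X, IsOpen D → D.Nonempty →
      ∃ n, M < n ∧ (D ∩ F^[n] ⁻¹' U).Nonempty := by
  intro M
  induction M with
  | zero =>
    intro D hD hDne
    obtain ⟨n, hn1, hne⟩ := st_helper hF hD hDne hUne
    exact ⟨n, hn1, hne⟩
  | succ M ih =>
    intro D hD hDne
    obtain ⟨n, hn, hne⟩ := ih D hD hDne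
    have hD'open : IsOpen (D ∩ F^[n] ⁻¹' U) := hD.inter (hU.preimage (hFc.iterate n))
    obtain ⟨m, hm1, w, hw⟩ := st_helper hF hD'open hne hne
    refine ⟨n + m, by omega, w, hw.1.1, ?_⟩
    rw [Set.mem_preimage, Function.iterate_add_apply]
    exact hw.2.2

/-- **(Generalization of STii)** Given any sequence of nonempty open sets
(U_j), a continuous strongly transitive map of a nonempty compact metric space
has a point x₀ and a strictly increasing sequence (m_j) with F^{m_j}(x₀) in the
closure of U_j for every j. -/
theorem exists_orbit_visiting_sequence {X : Type*} [MetricSpace X]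
    [CompactSpace X] [Nonempty X] (F : X → X) (hFc : Continuous F)
    (hF : StronglyTransitive F)
    (U : ℕ → Set X) (hUopen : ∀ j, IsOpen (U j)) (hUne : ∀ j, (U j).Nonempty) :
    ∃ (x₀ : X) (msec : ℕ → ℕ), StrictMono msec ∧
      ∀ j : ℕ, F^[msec j] x₀ ∈ closure (U j) := by
  classical
  set Good : ℕ → ℕ × Set X → Prop :=
    fun j p => IsOpen p.2 ∧ p.2.Nonempty ∧ p.2 ⊆ F^[p.1] ⁻¹' (U j) with hGood
  have hstep : ∀ j (p : {p : ℕ × Set X // Good j p}),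
      ∃ q : {q : ℕ × Set X // Good (j+1) q}, q.1.2 ⊆ p.1.2 ∧ p.1.1 < q.1.1 := by
    rintro j ⟨⟨m, V⟩, hVo, hVne, hVsub⟩
    obtain ⟨n, hn, hne⟩ := st_key hFc hF (hUopen (j+1)) (hUne (j+1)) m V hVo hVne
    exact ⟨⟨⟨n, V ∩ F^[n] ⁻¹' (U (j+1))⟩,
      hVo.inter ((hUopen (j+1)).preimage (hFc.iterate n)), hne,
      fun x hx => hx.2⟩, fun x hx => hx.1, hn⟩
  choose next hsub hlt using hstep
  have hGood0 : Good 0 (0, U 0) :=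
    ⟨hUopen 0, hUne 0, fun x hx => by simpa using hx⟩
  let seq : ∀ j, {p : ℕ × Set X // Good j p} :=
    fun j => Nat.rec ⟨(0, U 0), hGood0⟩ (fun j p => next j p) j
  have hseq_succ : ∀ j, seq (j+1) = next j (seq j) := fun j => rfl
  set msec : ℕ → ℕ := fun j => (seq j).1.1 with hmsec
  set V : ℕ → Set X := fun j => (seq j).1.2 with hV
  have hmono : StrictMono msec :=
    strictMono_nat_of_lt_succ fun j => by
      simpa [hmsec, hseq_succ j] using hlt j (seq j)
  have hnested : ∀ j, V (j+1) ⊆ V j := fun j => by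
    simpa [hV, hseq_succ j] using hsub j (seq j)
  have hVne : ∀ j, (V j).Nonempty := fun j => (seq j).2.2.1
  have hVsub : ∀ j, V j ⊆ F^[msec j] ⁻¹' (U j) := fun j => (seq j).2.2.2
  -- nested compact closures
  have hKne : (⋂ j, closure (V j)).Nonempty := by
    apply IsCompact.nonempty_iInter_of_sequence_nonempty_isCompact_isClosed
      (fun j => closure (V j))
      (fun j => closure_mono (hnested j))
      (fun j => (hVne j).closure)
      (isClosed_closure.isCompact)
      (fun j => isClosed_closure)
  obtain ⟨x₀, hx₀⟩ := hKne
  refine ⟨x₀, msec, hmono, fun j => ?_⟩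
  have hx : x₀ ∈ closure (V j) := Set.mem_iInter.mp hx₀ j
  have hsubcl : closure (V j) ⊆ F^[msec j] ⁻¹' closure (U j) :=
    closure_minimal ((hVsub j).trans (Set.preimage_mono subset_closure))
      (isClosed_closure.preimage (hFc.iterate (msec j)))
  exact hsubcl hx
end

section
/- (Existence and semiconjugacy of the Boyland–Franks projection) For every z ∈ ℝ^d the limit lim_{n→∞} m^{−n} v·F̂ⁿ(z) exists, the convergence is uniform in z, the resulting function Φ̂(z) = k⁻¹ lim_{n→∞} m^{−n} v·F̂ⁿ(z) is continuous on ℝ^d, and Φ̂(F̂(z)) = m Φ̂(z) for every z ∈ ℝ^d. -/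
open Filter Topology

noncomputable section

/-- **Existence and semiconjugacy of the Boyland–Franks projection.**
For F̂(z) = Mz + G(z) with G continuous and ℤ^d-periodic and v an integer left
eigenvector of M with integer eigenvalue m, |m| > 1, the limits
k·Φ̂(z) = lim_{n→∞} m⁻ⁿ v·F̂ⁿ(z) exist uniformly in z, Φ̂ is continuous, and
Φ̂(F̂(z)) = m·Φ̂(z) for all z. -/
theorem boyland_franks_projection
    (d : ℕ)
    (M : Matrix (Fin d) (Fin d) ℤ) (G : (Fin d → ℝ) → (Fin d → ℝ))
    (Fh : (Fin d → ℝ) → (Fin d → ℝ))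
    (hFh : ∀ z, Fh z = (fun i => ∑ j, (M i j : ℝ) * z j) + G z)
    (hGcont : Continuous G)
    (hGper : ∀ (z : Fin d → ℝ) (ν : Fin d → ℤ),
      G (z + fun i => (ν i : ℝ)) = G z)
    (m : ℤ) (hm : 1 < |m|)
    (v : Fin d → ℤ) (hv : v ≠ 0)
    (hvleft : ∀ j, ∑ i, v i * M i j = m * v j)
    -- k = min{|v·x| : x ∈ ℤ^d, v·x ≠ 0}
    (k : ℤ)
    (hk : IsLeast {n : ℤ | ∃ x : Fin d → ℤ,
      n = |∑ i, v i * x i| ∧ (∑ i, v i * x i) ≠ 0} k) :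
    ∃ Φh : (Fin d → ℝ) → ℝ,
      TendstoUniformly
        (fun (n : ℕ) (z : Fin d → ℝ) =>
          ((m : ℝ) ^ n)⁻¹ * ∑ i, (v i : ℝ) * (Fh^[n] z) i)
        (fun z => (k : ℝ) * Φh z) atTop ∧
      Continuous Φh ∧
      ∀ z, Φh (Fh z) = (m : ℝ) * Φh z := by
  classical
  -- basic facts about m and k
  have hmR : (1 : ℝ) < |(m : ℝ)| := by
    rw [← Int.cast_abs]; exact_mod_cast hm
  have hm0 : (m : ℝ) ≠ 0 := by
    intro h; rw [h] at hmR; norm_num at hmR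
  have hk0 : (k : ℝ) ≠ 0 := by
    obtain ⟨x, hx1, hx2⟩ := hk.1
    have : k ≠ 0 := by rw [hx1]; exact abs_ne_zero.mpr hx2
    exact_mod_cast this
  -- the linear functional φ and the periodic part g
  set φ : (Fin d → ℝ) → ℝ := fun z => ∑ i, (v i : ℝ) * z i with hφdef
  set g : (Fin d → ℝ) → ℝ := fun z => ∑ i, (v i : ℝ) * G z i with hgdef
  have hφcont : Continuous φ := by
    apply continuous_finset_sum
    intro i _
    exact continuous_const.mul (continuous_apply i)
  have hgcont : Continuous g := by
    apply continuous_finset_sum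
    intro i _
    exact continuous_const.mul ((continuous_apply i).comp hGcont)
  have hFcont : Continuous Fh := by
    have : Continuous fun z : Fin d → ℝ => (fun i => ∑ j, (M i j : ℝ) * z j) + G z := by
      apply Continuous.add
      · apply continuous_pi
        intro i
        apply continuous_finset_sum
        intro j _
        exact continuous_const.mul (continuous_apply j)
      · exact hGcont
    exact this.congr fun z => (hFh z).symm
  -- the key cocycle identity
  have hkey : ∀ z, φ (Fh z) = (m : ℝ) * φ z + g z := by
    intro z
    rw [hFh z]
    simp only [hφdef, hgdef, Pi.add_apply]
    have h1 : ∀ i, (v i : ℝ) * ((∑ j, (M i j : ℝ) * z j) + G z i)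
        = (∑ j, (v i : ℝ) * (M i j : ℝ) * z j) + (v i : ℝ) * G z i := by
      intro i
      rw [mul_add, Finset.mul_sum]
      ring_nf
    simp_rw [h1]
    rw [Finset.sum_add_distrib]
    congr 1
    rw [Finset.sum_comm, Finset.mul_sum]
    refine Finset.sum_congr rfl fun j _ => ?_
    rw [← Finset.sum_mul]
    have : (∑ i, (v i : ℝ) * (M i j : ℝ)) = (m : ℝ) * (v j : ℝ) := by
      exact_mod_cast congrArg (fun t : ℤ => (t : ℝ)) (hvleft j)
    rw [this]
    ring
  -- g is bounded, by periodicity and compactness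
  obtain ⟨C, hC⟩ : ∃ C, ∀ z, ‖g z‖ ≤ C := by
    have hcomp : IsCompact (Set.Icc (0 : Fin d → ℝ) 1) := isCompact_Icc
    obtain ⟨C, hC⟩ := hcomp.exists_bound_of_continuousOn hgcont.continuousOn
    refine ⟨C, fun z => ?_⟩
    have hzw : z = (fun i => Int.fract (z i)) + fun i => ((⌊z i⌋ : ℤ) : ℝ) := by
      funext i
      exact (Int.fract_add_floor (z i)).symm
    have hGzw : G z = G (fun i => Int.fract (z i)) := by
      conv_lhs => rw [hzw]
      exact hGper _ _
    have hgz : g z = g (fun i => Int.fract (z i)) := by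
      rw [hgdef]
      simp only [hGzw]
    rw [hgz]
    apply hC
    constructor
    · intro i; exact (Int.fract_nonneg _)
    · intro i; exact le_of_lt (Int.fract_lt_one _)
  have hC0 : 0 ≤ C := le_trans (norm_nonneg _) (hC 0)
  -- the series terms
  set f : ℕ → (Fin d → ℝ) → ℝ := fun j z => ((m : ℝ) ^ (j + 1))⁻¹ * g (Fh^[j] z) with hfdef
  have hfcont : ∀ j, Continuous (f j) := by
    intro j
    exact continuous_const.mul (hgcont.comp (hFcont.iterate j))
  -- partial sums identity
  have hS : ∀ (n : ℕ) (z : Fin d → ℝ),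
      ((m : ℝ) ^ n)⁻¹ * φ (Fh^[n] z) = φ z + ∑ j ∈ Finset.range n, f j z := by
    intro n
    induction n with
    | zero => intro z; simp
    | succ n ih =>
      intro z
      rw [Function.iterate_succ_apply', hkey, Finset.sum_range_succ, ← add_assoc, ← ih z]
      simp only [hfdef]
      field_simp
      ring
  -- summable bound
  have hsum : Summable (fun j : ℕ => C * |(m : ℝ)|⁻¹ ^ (j + 1)) := by
    have hr0 : (0 : ℝ) ≤ |(m : ℝ)|⁻¹ := inv_nonneg.mpr (abs_nonneg _)
    have hr1 : |(m : ℝ)|⁻¹ < 1 := by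
      rw [inv_lt_one_iff₀]; right; exact hmR
    have : Summable (fun j : ℕ => |(m : ℝ)|⁻¹ ^ j) := summable_geometric_of_lt_one hr0 hr1
    simpa [pow_succ, mul_comm, mul_assoc, mul_left_comm] using (this.mul_left (C * |(m : ℝ)|⁻¹))
  have hbound : ∀ (j : ℕ) (z : Fin d → ℝ), ‖f j z‖ ≤ C * |(m : ℝ)|⁻¹ ^ (j + 1) := by
    intro j z
    rw [hfdef]
    simp only [norm_mul, norm_inv, norm_pow, Real.norm_eq_abs]
    rw [mul_comm C _, ← inv_pow]
    apply mul_le_mul_of_nonneg_left (hC _)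
    positivity
  -- uniform convergence of the partial sums of f
  have huc : TendstoUniformly (fun N z => ∑ j ∈ Finset.range N, f j z)
      (fun z => ∑' j, f j z) atTop := tendstoUniformly_tsum_nat hsum hbound
  set T : (Fin d → ℝ) → ℝ := fun z => ∑' j, f j z with hTdef
  set L : (Fin d → ℝ) → ℝ := fun z => φ z + T z with hLdef
  -- uniform convergence with φ added
  have hucL : TendstoUniformly (fun (n : ℕ) (z : Fin d → ℝ) =>
      ((m : ℝ) ^ n)⁻¹ * ∑ i, (v i : ℝ) * (Fh^[n] z) i) L atTop := by
    rw [Metric.tendstoUniformly_iff] at huc ⊢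
    intro ε hε
    filter_upwards [huc ε hε] with n hn z
    have : ((m : ℝ) ^ n)⁻¹ * ∑ i, (v i : ℝ) * (Fh^[n] z) i
        = φ z + ∑ j ∈ Finset.range n, f j z := hS n z
    rw [this, hLdef]
    simpa [dist_add_left] using hn z
  -- pointwise limits
  have hpt : ∀ z, Tendsto (fun n : ℕ => ((m : ℝ) ^ n)⁻¹ * φ (Fh^[n] z)) atTop (𝓝 (L z)) := by
    intro z
    have := hucL.tendsto_at z
    exact this
  refine ⟨fun z => (k : ℝ)⁻¹ * L z, ?_, ?_, ?_⟩
  · have : (fun z => (k : ℝ) * ((k : ℝ)⁻¹ * L z)) = L := by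
      funext z; field_simp
    rw [this]
    exact hucL
  · exact continuous_const.mul
      (hucL.continuous (Frequently.of_forall fun n => by
        have : Continuous fun z : Fin d → ℝ => ((m : ℝ) ^ n)⁻¹ * φ (Fh^[n] z) :=
          continuous_const.mul (hφcont.comp (hFcont.iterate n))
        exact this))
  · intro z
    have h1 : Tendsto (fun n : ℕ => ((m : ℝ) ^ n)⁻¹ * φ (Fh^[n] (Fh z))) atTop
        (𝓝 (L (Fh z))) := hpt (Fh z)
    have h2 : Tendsto (fun n : ℕ => (m : ℝ) * (((m : ℝ) ^ (n + 1))⁻¹ * φ (Fh^[n + 1] z)))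
        atTop (𝓝 ((m : ℝ) * L z)) := by
      apply Tendsto.const_mul
      exact (hpt z).comp (tendsto_add_atTop_nat 1)
    have heq : (fun n : ℕ => ((m : ℝ) ^ n)⁻¹ * φ (Fh^[n] (Fh z)))
        = fun n : ℕ => (m : ℝ) * (((m : ℝ) ^ (n + 1))⁻¹ * φ (Fh^[n + 1] z)) := by
      funext n
      rw [← Function.iterate_succ_apply]
      field_simp
      ring
    rw [heq] at h1
    have hL : L (Fh z) = (m : ℝ) * L z := tendsto_nhds_unique h1 h2
    show (k : ℝ)⁻¹ * L (Fh z) = (m : ℝ) * ((k : ℝ)⁻¹ * L z)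
    rw [hL]
    ring
end
end

section
/- (Descent of Φ̂ to the torus) For every z ∈ ℝ^d and every ν ∈ ℤ^d one has Φ̂(z + ν) = Φ̂(z) + k⁻¹(v·ν), and k⁻¹(v·ν) is an integer. Consequently there is a unique continuous map Φ: 𝕋^d → ℝ/ℤ with Φ(π(z)) = Φ̂(z) mod 1 for all z ∈ ℝ^d, and it satisfies Φ(F(ζ)) = m·Φ(ζ) for every ζ ∈ 𝕋^d, where F is the torus map induced by F̂ and m· denotes multiplication by m on ℝ/ℤ. -/
open Filter Topology

noncomputable section

/-- The d-torus 𝕋^d = ℝ^d/ℤ^d. -/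
abbrev Torus (d : ℕ) := Fin d → AddCircle (1 : ℝ)

/-- Projection π : ℝ^d → 𝕋^d, z ↦ z mod 1. -/
def projT (d : ℕ) (z : Fin d → ℝ) : Torus d := fun i => (z i : AddCircle (1 : ℝ))

/-- **Descent of Φ̂ to the torus.** Φ̂(z+ν) = Φ̂(z) + k⁻¹(v·ν) with k⁻¹(v·ν) an
integer; hence there is a unique continuous Φ : 𝕋^d → ℝ/ℤ with
Φ(π z) = Φ̂(z) mod 1, and it satisfies Φ(F ζ) = m·Φ(ζ). -/
theorem descent_to_torus
    (d : ℕ)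
    (M : Matrix (Fin d) (Fin d) ℤ) (G : (Fin d → ℝ) → (Fin d → ℝ))
    (Fh : (Fin d → ℝ) → (Fin d → ℝ))
    (hFh : ∀ z, Fh z = (fun i => ∑ j, (M i j : ℝ) * z j) + G z)
    (hGcont : Continuous G)
    (hGper : ∀ (z : Fin d → ℝ) (ν : Fin d → ℤ),
      G (z + fun i => (ν i : ℝ)) = G z)
    -- the induced torus map F
    (F : Torus d → Torus d) (hFc : Continuous F)
    (hFind : ∀ z, F (projT d z) = projT d (Fh z))
    (m : ℤ) (hm : 1 < |m|)
    (v : Fin d → ℤ) (hv : v ≠ 0)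
    (hvleft : ∀ j, ∑ i, v i * M i j = m * v j)
    -- k = min{|v·x| : x ∈ ℤ^d, v·x ≠ 0}
    (k : ℤ)
    (hk : IsLeast {n : ℤ | ∃ x : Fin d → ℤ,
      n = |∑ i, v i * x i| ∧ (∑ i, v i * x i) ≠ 0} k)
    -- Φ̂(z) = k⁻¹ lim_{n→∞} m⁻ⁿ v·F̂ⁿ(z), which exists and is continuous
    (Φh : (Fin d → ℝ) → ℝ)
    (hΦlim : ∀ z, Tendsto
      (fun n : ℕ => ((m : ℝ) ^ n)⁻¹ * ∑ i, (v i : ℝ) * (Fh^[n] z) i)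
      atTop (nhds ((k : ℝ) * Φh z)))
    (hΦcont : Continuous Φh) :
    (∀ (z : Fin d → ℝ) (ν : Fin d → ℤ),
      Φh (z + fun i => (ν i : ℝ)) = Φh z + (k : ℝ)⁻¹ * ∑ i, (v i : ℝ) * (ν i : ℝ)) ∧
    (∀ ν : Fin d → ℤ, k ∣ ∑ i, v i * ν i) ∧
    (∃ Φ : Torus d → AddCircle (1 : ℝ),
      (Continuous Φ ∧ ∀ z, Φ (projT d z) = ((Φh z : ℝ) : AddCircle (1 : ℝ))) ∧
      (∀ Φ' : Torus d → AddCircle (1 : ℝ), Continuous Φ' →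
        (∀ z, Φ' (projT d z) = ((Φh z : ℝ) : AddCircle (1 : ℝ))) → Φ' = Φ) ∧
      (∀ ζ : Torus d, Φ (F ζ) = m • Φ ζ)) := by
  obtain ⟨⟨x₀, hx₀, hx₀ne⟩, hkmin⟩ := hk
  have hkpos : 0 < k := hx₀ ▸ abs_pos.mpr hx₀ne
  have hkne : (k : ℝ) ≠ 0 := by exact_mod_cast hkpos.ne'
  have hmne : (m : ℝ) ≠ 0 := by
    have : m ≠ 0 := by rintro rfl; simp at hm
    exact_mod_cast this
  -- key iterate lemma
  have key : ∀ (n : ℕ) (z : Fin d → ℝ) (ν : Fin d → ℤ),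
      ∃ μ : Fin d → ℤ,
        Fh^[n] (z + fun i => (ν i : ℝ)) = Fh^[n] z + (fun i => (μ i : ℝ)) ∧
        (∑ i, v i * μ i) = m ^ n * ∑ i, v i * ν i := by
    intro n
    induction n with
    | zero => intro z ν; exact ⟨ν, by simp, by simp⟩
    | succ n ih =>
      intro z ν
      obtain ⟨μ, h1, h2⟩ := ih z ν
      refine ⟨fun i => ∑ j, M i j * μ j, ?_, ?_⟩
      · rw [Function.iterate_succ_apply', Function.iterate_succ_apply', h1]
        funext i
        have hG : G (Fh^[n] z + fun i => (μ i : ℝ)) = G (Fh^[n] z) := hGper _ μ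
        simp only [hFh, Pi.add_apply, hG]
        push_cast
        have : ∑ j, (M i j : ℝ) * (Fh^[n] z j + (μ j : ℝ))
            = ∑ j, (M i j : ℝ) * Fh^[n] z j + ∑ j, (M i j : ℝ) * (μ j : ℝ) := by
          rw [← Finset.sum_add_distrib]
          exact Finset.sum_congr rfl fun j _ => by ring
        rw [this]; ring
      · calc ∑ i, v i * ∑ j, M i j * μ j
            = ∑ j, (∑ i, v i * M i j) * μ j := by
              simp only [Finset.mul_sum, Finset.sum_mul]
              rw [Finset.sum_comm]
              exact Finset.sum_congr rfl fun j _ =>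
                Finset.sum_congr rfl fun i _ => by ring
          _ = m * ∑ j, v j * μ j := by
              simp only [hvleft, Finset.mul_sum]
              exact Finset.sum_congr rfl fun j _ => by ring
          _ = m ^ (n + 1) * ∑ i, v i * ν i := by rw [h2, pow_succ]; ring
  -- part 1 (premultiplied by k)
  have part1k : ∀ (z : Fin d → ℝ) (ν : Fin d → ℤ),
      (k : ℝ) * Φh (z + fun i => (ν i : ℝ))
        = (k : ℝ) * Φh z + ∑ i, (v i : ℝ) * (ν i : ℝ) := by
    intro z ν
    have hA := hΦlim (z + fun i => (ν i : ℝ))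
    have hB : Tendsto
        (fun n : ℕ => ((m : ℝ) ^ n)⁻¹ * ∑ i, (v i : ℝ) * (Fh^[n] (z + fun i => (ν i : ℝ))) i)
        atTop (nhds ((k : ℝ) * Φh z + ∑ i, (v i : ℝ) * (ν i : ℝ))) := by
      have := (hΦlim z).add_const (∑ i, (v i : ℝ) * (ν i : ℝ))
      refine this.congr fun n => ?_
      obtain ⟨μ, h1, h2⟩ := key n z ν
      rw [h1]
      have hsum : ∑ i, (v i : ℝ) * (Fh^[n] z + fun i => (μ i : ℝ)) i
          = ∑ i, (v i : ℝ) * Fh^[n] z i + ∑ i, (v i : ℝ) * (μ i : ℝ) := by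
        rw [← Finset.sum_add_distrib]
        exact Finset.sum_congr rfl fun i _ => by simp [Pi.add_apply]; ring
      rw [hsum]
      have h2' : (∑ i, (v i : ℝ) * (μ i : ℝ)) = (m : ℝ) ^ n * ∑ i, (v i : ℝ) * (ν i : ℝ) := by
        have := congrArg (fun t : ℤ => (t : ℝ)) h2
        push_cast at this
        exact this
      rw [mul_add, h2']
      field_simp
    exact tendsto_nhds_unique hA hB
  have part1 : ∀ (z : Fin d → ℝ) (ν : Fin d → ℤ),
      Φh (z + fun i => (ν i : ℝ)) = Φh z + (k : ℝ)⁻¹ * ∑ i, (v i : ℝ) * (ν i : ℝ) := by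
    intro z ν
    have h := part1k z ν
    field_simp at h ⊢
    linarith
  -- part 2 : divisibility
  have hdvd : ∀ ν : Fin d → ℤ, k ∣ ∑ i, v i * ν i := by
    intro ν
    set s := ∑ i, v i * ν i with hs
    by_contra h
    have hr : s % k ≠ 0 := fun h0 => h (Int.dvd_of_emod_eq_zero h0)
    have hr0 : 0 ≤ s % k := Int.emod_nonneg s hkpos.ne'
    have hrk : s % k < k := Int.emod_lt_of_pos s hkpos
    -- find y with ∑ v y = k
    set t := ∑ i, v i * x₀ i with ht
    obtain ⟨y, hy⟩ : ∃ y : Fin d → ℤ, ∑ i, v i * y i = k := by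
      rcases le_or_gt 0 t with h' | h'
      · exact ⟨x₀, by rw [← ht, hx₀, abs_of_nonneg h']⟩
      · refine ⟨-x₀, ?_⟩
        have : ∑ i, v i * (-x₀) i = -t := by
          rw [ht, ← Finset.sum_neg_distrib]
          exact Finset.sum_congr rfl fun i _ => by simp
        rw [this, hx₀, abs_of_neg h']
    -- witness
    set ξ : Fin d → ℤ := fun i => ν i - (s / k) * y i with hξ
    have hξsum : ∑ i, v i * ξ i = s % k := by
      have expand : ∑ i, v i * ξ i = (∑ i, v i * ν i) - (s / k) * ∑ i, v i * y i := by
        rw [Finset.mul_sum, ← Finset.sum_sub_distrib]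
        exact Finset.sum_congr rfl fun i _ => by simp only [hξ]; ring
      rw [expand, hy, ← hs, Int.emod_def]
      ring
    have hmem : |∑ i, v i * ξ i| ∈ {n : ℤ | ∃ x : Fin d → ℤ,
        n = |∑ i, v i * x i| ∧ (∑ i, v i * x i) ≠ 0} := ⟨ξ, rfl, by rw [hξsum]; exact hr⟩
    have := hkmin hmem
    rw [hξsum, abs_of_nonneg hr0] at this
    omega
  -- quotient structure
  have hmkq : IsOpenQuotientMap (fun r : ℝ => (r : AddCircle (1 : ℝ))) :=
    QuotientAddGroup.isOpenQuotientMap_mk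
  have hproj : IsOpenQuotientMap (projT d) :=
    IsOpenQuotientMap.piMap (fun _ : Fin d => hmkq)
  have hsurj : Function.Surjective (projT d) := hproj.surjective
  -- well-definedness of the descent
  have hwd : ∀ z z', projT d z = projT d z' →
      ((Φh z : ℝ) : AddCircle (1 : ℝ)) = ((Φh z' : ℝ) : AddCircle (1 : ℝ)) := by
    intro z z' hzz
    have hν : ∀ i, ∃ n : ℤ, z' i = z i + n := by
      intro i
      have h1 : (z i : AddCircle (1 : ℝ)) = (z' i : AddCircle (1 : ℝ)) := congrFun hzz i
      rw [QuotientAddGroup.eq_iff_sub_mem] at h1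
      obtain ⟨n, hn⟩ := (AddSubgroup.mem_zmultiples_iff).mp h1
      exact ⟨-n, by rw [zsmul_eq_mul, mul_one] at hn; push_cast; linarith⟩
    choose ν hν using hν
    have hz' : z' = z + fun i => (ν i : ℝ) := funext fun i => by
      rw [Pi.add_apply]; exact hν i
    obtain ⟨c, hc⟩ := hdvd ν
    have hcast : (∑ i, (v i : ℝ) * (ν i : ℝ)) = ((k * c : ℤ) : ℝ) := by
      rw [← hc]; push_cast; rfl
    rw [hz', part1 z ν, hcast]
    have : (k : ℝ)⁻¹ * ((k * c : ℤ) : ℝ) = (c : ℝ) := by push_cast; field_simp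
    rw [this]
    symm
    rw [QuotientAddGroup.eq_iff_sub_mem]
    refine (AddSubgroup.mem_zmultiples_iff).mpr ⟨c, ?_⟩
    rw [zsmul_eq_mul, mul_one]; ring
  -- define Φ
  set Φ : Torus d → AddCircle (1 : ℝ) :=
    fun ζ => ((Φh (Function.surjInv hsurj ζ) : ℝ) : AddCircle (1 : ℝ)) with hΦdef
  have hΦproj : ∀ z, Φ (projT d z) = ((Φh z : ℝ) : AddCircle (1 : ℝ)) := fun z =>
    hwd _ z (Function.surjInv_eq hsurj (projT d z))
  have hΦc : Continuous Φ := by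
    refine hproj.continuous_comp_iff.mp ?_
    have : (Φ ∘ projT d) = fun z => ((Φh z : ℝ) : AddCircle (1 : ℝ)) :=
      funext fun z => hΦproj z
    rw [this]
    exact hmkq.continuous.comp hΦcont
  -- functional equation for Φh
  have hfe : ∀ z, Φh (Fh z) = (m : ℝ) * Φh z := by
    intro z
    have h1 := hΦlim (Fh z)
    have h3 : Tendsto (fun n : ℕ => ((m : ℝ) ^ n)⁻¹ * ∑ i, (v i : ℝ) * (Fh^[n] (Fh z)) i)
        atTop (nhds ((m : ℝ) * ((k : ℝ) * Φh z))) := by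
      have h4 := (hΦlim z).comp (tendsto_add_atTop_nat 1)
      have h5 := h4.const_mul (m : ℝ)
      refine h5.congr fun n => ?_
      show (m : ℝ) * (((m : ℝ) ^ (n + 1))⁻¹ * ∑ i, (v i : ℝ) * (Fh^[n + 1] z) i) = _
      rw [Function.iterate_succ_apply]
      rw [pow_succ]
      field_simp
    have h6 := tendsto_nhds_unique h1 h3
    have : (k : ℝ) * Φh (Fh z) = (k : ℝ) * ((m : ℝ) * Φh z) := by rw [h6]; ring
    exact mul_left_cancel₀ hkne this
  refine ⟨part1, hdvd, Φ, ⟨hΦc, hΦproj⟩, ?_, ?_⟩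
  · intro Φ' hΦ'c hΦ'proj
    funext ζ
    obtain ⟨z, rfl⟩ := hsurj ζ
    rw [hΦ'proj, hΦproj]
  · intro ζ
    obtain ⟨z, rfl⟩ := hsurj ζ
    rw [hFind, hΦproj, hΦproj, hfe z]
    rw [show ((m : ℝ) * Φh z) = (m • (Φh z : ℝ)) from (zsmul_eq_mul _ _).symm]
    exact AddCircle.coe_zsmul _
end
end

section
/- (Lipschitz-type estimate for Φ̂) For every z₁, z₂ ∈ ℝ^d, | (Φ̂(z₁) − Φ̂(z₂)) − k⁻¹ v·(z₁ − z₂) | ≤ (2/(|m| − 1)) k⁻¹ ‖v‖ ‖G‖_∞, where ‖G‖_∞ = sup_{z∈ℝ^d} ‖G(z)‖. In particular, | |Φ̂(z₁) − Φ̂(z₂)| − k⁻¹|v·(z₁ − z₂)| | ≤ (2/(|m| − 1)) k⁻¹ ‖v‖ ‖G‖_∞. -/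
open Filter Topology

noncomputable section

/-- Euclidean space ℝ^d. -/
abbrev E (d : ℕ) := EuclideanSpace ℝ (Fin d)

/-- Cast of an integer vector into ℝ^d. -/
def intCast {d : ℕ} (ν : Fin d → ℤ) : E d := WithLp.toLp 2 (fun i => (ν i : ℝ))

/-- **Lipschitz-type estimate for Φ̂.** For all z₁, z₂,
|(Φ̂(z₁) − Φ̂(z₂)) − k⁻¹ v·(z₁−z₂)| ≤ (2/(|m|−1)) k⁻¹ ‖v‖ ‖G‖_∞, and in
particular ||Φ̂(z₁) − Φ̂(z₂)| − k⁻¹|v·(z₁−z₂)|| ≤ (2/(|m|−1)) k⁻¹ ‖v‖ ‖G‖_∞. -/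
theorem lipschitz_estimate_phi
    (d : ℕ)
    (M : Matrix (Fin d) (Fin d) ℤ) (G : E d → E d) (Fh : E d → E d)
    (hFh : ∀ z i, Fh z i = (∑ j, (M i j : ℝ) * z j) + G z i)
    (hGcont : Continuous G)
    (hGper : ∀ (z : E d) (ν : Fin d → ℤ), G (z + intCast ν) = G z)
    (m : ℤ) (hm : 1 < |m|)
    (v : Fin d → ℤ) (hv : v ≠ 0)
    (hvleft : ∀ j, ∑ i, v i * M i j = m * v j)
    -- k = min{|v·x| : x ∈ ℤ^d, v·x ≠ 0}
    (k : ℤ)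
    (hk : IsLeast {n : ℤ | ∃ x : Fin d → ℤ,
      n = |∑ i, v i * x i| ∧ (∑ i, v i * x i) ≠ 0} k)
    -- Φ̂(z) = k⁻¹ lim_{n→∞} m⁻ⁿ v·F̂ⁿ(z), which exists and is continuous
    (Φh : E d → ℝ)
    (hΦlim : ∀ z, Tendsto
      (fun n : ℕ => ((m : ℝ) ^ n)⁻¹ * ∑ i, (v i : ℝ) * (Fh^[n] z) i)
      atTop (nhds ((k : ℝ) * Φh z)))
    (hΦcont : Continuous Φh) :
    ∀ z₁ z₂ : E d,
      |(Φh z₁ - Φh z₂) - (k : ℝ)⁻¹ * ∑ i, (v i : ℝ) * (z₁ i - z₂ i)| ≤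
        2 / (|(m : ℝ)| - 1) * ((k : ℝ)⁻¹ * (‖intCast v‖ * ⨆ z : E d, ‖G z‖)) ∧
      abs (|Φh z₁ - Φh z₂| - (k : ℝ)⁻¹ * |∑ i, (v i : ℝ) * (z₁ i - z₂ i)|) ≤
        2 / (|(m : ℝ)| - 1) * ((k : ℝ)⁻¹ * (‖intCast v‖ * ⨆ z : E d, ‖G z‖)) := by
  -- notation
  intro z₁ z₂
  set S : E d → ℝ := fun z => ∑ i, (v i : ℝ) * z i with hSdef
  set C : ℝ := ⨆ z : E d, ‖G z‖ with hCdef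
  -- G is bounded by C
  have hK : IsCompact ((fun p : Fin d → ℝ => ((EuclideanSpace.equiv (Fin d) ℝ).symm p : E d)) ''
      Set.Icc (0 : Fin d → ℝ) 1) :=
    isCompact_Icc.image (EuclideanSpace.equiv (Fin d) ℝ).symm.continuous
  have hsub : Set.range (fun z : E d => ‖G z‖) ⊆
      (fun z : E d => ‖G z‖) '' ((fun p : Fin d → ℝ => ((EuclideanSpace.equiv (Fin d) ℝ).symm p : E d)) ''
      Set.Icc (0 : Fin d → ℝ) 1) := by
    rintro - ⟨z, rfl⟩
    set w : E d := (EuclideanSpace.equiv (Fin d) ℝ).symm (fun i => Int.fract (z i)) with hw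
    have hz : w + intCast (fun i => ⌊z i⌋) = z := by
      ext i
      rw [PiLp.add_apply]
      show Int.fract (z i) + (⌊z i⌋ : ℝ) = z i
      exact Int.fract_add_floor _
    refine ⟨w, ⟨fun i => Int.fract (z i), ⟨fun i => Int.fract_nonneg _,
      fun i => le_of_lt (Int.fract_lt_one _)⟩, rfl⟩, ?_⟩
    show ‖G w‖ = ‖G z‖
    rw [← hz, hGper]
  have hbdd : BddAbove (Set.range fun z : E d => ‖G z‖) :=
    BddAbove.mono hsub (hK.image (continuous_norm.comp hGcont)).bddAbove
  have hGle : ∀ z : E d, ‖G z‖ ≤ C := fun z => le_ciSup hbdd z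
  have hC0 : 0 ≤ C := le_trans (norm_nonneg _) (hGle 0)
  set D : ℝ := ‖intCast v‖ * C with hDdef
  have hD0 : 0 ≤ D := mul_nonneg (norm_nonneg _) hC0
  -- inner product bound
  have hinner : ∀ z : E d, |∑ i, (v i : ℝ) * G z i| ≤ D := by
    intro z
    have h1 : ∑ i, (v i : ℝ) * G z i = inner ℝ (intCast v) (G z) := by
      rw [PiLp.inner_apply]; simp [intCast, mul_comm]
    rw [h1]
    exact le_trans (abs_real_inner_le_norm _ _)
      (mul_le_mul_of_nonneg_left (hGle z) (norm_nonneg _))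
  -- recurrence for S ∘ Fh
  have hSstep : ∀ z : E d, S (Fh z) = (m : ℝ) * S z + ∑ i, (v i : ℝ) * G z i := by
    intro z
    have h1 : S (Fh z)
        = (∑ i, (v i : ℝ) * ∑ j, (M i j : ℝ) * z j) + ∑ i, (v i : ℝ) * G z i := by
      rw [hSdef]
      simp only
      rw [← Finset.sum_add_distrib]
      refine Finset.sum_congr rfl fun i _ => ?_
      rw [hFh, mul_add]
    rw [h1]
    congr 1
    have h2 : ∀ i, (v i : ℝ) * ∑ j, (M i j : ℝ) * z j = ∑ j, (v i : ℝ) * (M i j : ℝ) * z j := by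
      intro i; rw [Finset.mul_sum]; exact Finset.sum_congr rfl fun j _ => (mul_assoc _ _ _).symm
    simp_rw [h2]
    rw [Finset.sum_comm, Finset.mul_sum]
    refine Finset.sum_congr rfl fun j _ => ?_
    rw [← Finset.sum_mul, ← mul_assoc]
    congr 1
    exact_mod_cast hvleft j
  -- basic facts about m
  have hm1 : (1 : ℝ) < |(m : ℝ)| := by
    rw [← Int.cast_abs]; exact_mod_cast hm
  have hm0 : (0 : ℝ) < |(m : ℝ)| := lt_trans one_pos hm1
  have hmne : (m : ℝ) ≠ 0 := fun h => by simp [h] at hm0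
  set r : ℝ := |(m : ℝ)|⁻¹ with hrdef
  have hr0 : 0 < r := inv_pos.mpr hm0
  have hr1 : r < 1 := by
    rw [hrdef, inv_lt_one_iff₀]; right; exact hm1
  -- telescoping bound
  set b : E d → ℕ → ℝ := fun z n => ((m : ℝ) ^ n)⁻¹ * S (Fh^[n] z) with hbdef
  have hbstep : ∀ (z : E d) (n : ℕ), b z (n + 1) - b z n
      = ((m : ℝ) ^ (n + 1))⁻¹ * ∑ i, (v i : ℝ) * G (Fh^[n] z) i := by
    intro z n
    rw [hbdef]
    simp only
    rw [Function.iterate_succ_apply', hSstep]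
    field_simp
    ring
  have hbtel : ∀ (z : E d) (n : ℕ), |b z n - b z 0| ≤ D * ∑ j ∈ Finset.range n, r ^ (j + 1) := by
    intro z n
    induction n with
    | zero => simp
    | succ n ih =>
      have h1 : |b z (n + 1) - b z 0| ≤ |b z (n + 1) - b z n| + |b z n - b z 0| := by
        have := abs_add_le (b z (n + 1) - b z n) (b z n - b z 0)
        simpa using this
      have h2 : |b z (n + 1) - b z n| ≤ D * r ^ (n + 1) := by
        rw [hbstep]
        rw [abs_mul]
        have : |((m : ℝ) ^ (n + 1))⁻¹| = r ^ (n + 1) := by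
          rw [abs_inv, abs_pow, hrdef, inv_pow]
        rw [this, mul_comm]
        exact mul_le_mul_of_nonneg_right (hinner _) (pow_nonneg hr0.le _)
      calc |b z (n + 1) - b z 0| ≤ D * r ^ (n + 1) + D * ∑ j ∈ Finset.range n, r ^ (j + 1) :=
            le_trans h1 (add_le_add h2 ih)
        _ = D * ∑ j ∈ Finset.range (n + 1), r ^ (j + 1) := by
            rw [Finset.sum_range_succ]; ring
  -- geometric sum bound
  have hgeom : ∀ n : ℕ, (∑ j ∈ Finset.range n, r ^ (j + 1)) ≤ 1 / (|(m : ℝ)| - 1) := by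
    intro n
    have h1 : (∑ j ∈ Finset.range n, r ^ (j + 1)) = r * ∑ j ∈ Finset.range n, r ^ j := by
      rw [Finset.mul_sum]; exact Finset.sum_congr rfl fun j _ => by ring
    rw [h1]
    have h2 : (∑ j ∈ Finset.range n, r ^ j) ≤ 1 / (1 - r) := by
      have hpos : (0:ℝ) < 1 - r := by linarith
      have heq : (r ^ n - 1) / (r - 1) = (1 - r ^ n) / (1 - r) := by
        rw [← neg_div_neg_eq]; ring_nf
      rw [geom_sum_eq (ne_of_lt hr1), heq, div_le_div_iff₀ hpos hpos]
      nlinarith [pow_nonneg hr0.le n]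
    have h3 : r * ∑ j ∈ Finset.range n, r ^ j ≤ r * (1 / (1 - r)) :=
      mul_le_mul_of_nonneg_left h2 hr0.le
    refine le_trans h3 (le_of_eq ?_)
    rw [hrdef]
    field_simp
  -- limit bound
  have hlim : ∀ z : E d, |(k : ℝ) * Φh z - S z| ≤ D * (1 / (|(m : ℝ)| - 1)) := by
    intro z
    have hb0 : b z 0 = S z := by simp [hbdef]
    have htends : Tendsto (fun n => |b z n - b z 0|) atTop
        (nhds (|(k : ℝ) * Φh z - b z 0|)) := by
      exact (((hΦlim z).sub_const (b z 0)).abs)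
    have hle : ∀ n, |b z n - b z 0| ≤ D * (1 / (|(m : ℝ)| - 1)) := fun n =>
      le_trans (hbtel z n) (mul_le_mul_of_nonneg_left (hgeom n) hD0)
    have := le_of_tendsto htends (Filter.Eventually.of_forall hle)
    rwa [hb0] at this
  -- positivity of k
  have hk1 : (1 : ℤ) ≤ k := by
    obtain ⟨x, hx1, hx2⟩ := hk.1
    rw [hx1]
    exact Int.one_le_abs hx2
  have hkR : (0 : ℝ) < (k : ℝ) := by exact_mod_cast lt_of_lt_of_le zero_lt_one hk1
  have hkne : (k : ℝ) ≠ 0 := ne_of_gt hkR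
  -- conclusion
  have hsum : ∑ i, (v i : ℝ) * (z₁ i - z₂ i) = S z₁ - S z₂ := by
    rw [hSdef]
    simp only
    rw [← Finset.sum_sub_distrib]
    exact Finset.sum_congr rfl fun i _ => by ring
  have hmain : |(Φh z₁ - Φh z₂) - (k : ℝ)⁻¹ * ∑ i, (v i : ℝ) * (z₁ i - z₂ i)| ≤
      2 / (|(m : ℝ)| - 1) * ((k : ℝ)⁻¹ * D) := by
    have key : (Φh z₁ - Φh z₂) - (k : ℝ)⁻¹ * ∑ i, (v i : ℝ) * (z₁ i - z₂ i)
        = (k : ℝ)⁻¹ * (((k : ℝ) * Φh z₁ - S z₁) - ((k : ℝ) * Φh z₂ - S z₂)) := by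
      rw [hsum]
      field_simp
      ring
    rw [key, abs_mul, abs_inv, abs_of_pos hkR]
    have h1 : |((k : ℝ) * Φh z₁ - S z₁) - ((k : ℝ) * Φh z₂ - S z₂)|
        ≤ D * (1 / (|(m : ℝ)| - 1)) + D * (1 / (|(m : ℝ)| - 1)) :=
      le_trans (abs_sub _ _) (add_le_add (hlim z₁) (hlim z₂))
    have h2 := mul_le_mul_of_nonneg_left h1 (inv_nonneg.mpr hkR.le)
    refine le_trans h2 (le_of_eq ?_)
    ring
  constructor
  · exact hmain
  · refine le_trans ?_ hmain
    have : (k : ℝ)⁻¹ * |∑ i, (v i : ℝ) * (z₁ i - z₂ i)|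
        = |(k : ℝ)⁻¹ * ∑ i, (v i : ℝ) * (z₁ i - z₂ i)| := by
      rw [abs_mul, abs_inv, abs_of_pos hkR]
    rw [this]
    exact abs_abs_sub_abs_le_abs_sub _ _
end
end

section
/- (Surjectivity along lines; Boyland's lemma) For every x₀ ∈ ℝ and every line L in ℝ^d parallel to v (i.e. L = {z₀ + t v : t ∈ ℝ} for some z₀ ∈ ℝ^d), there exists a point z ∈ L with Φ̂(z) = x₀. In particular Φ̂: ℝ^d → ℝ is onto. -/
open Filter Topology

noncomputable section

/-- **Surjectivity along lines (Boyland's lemma).** For every x₀ ∈ ℝ and every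
line parallel to v there is a point z on the line with Φ̂(z) = x₀; in
particular Φ̂ is onto. -/
theorem phi_onto_along_lines
    (d : ℕ)
    (M : Matrix (Fin d) (Fin d) ℤ) (G : (Fin d → ℝ) → (Fin d → ℝ))
    (Fh : (Fin d → ℝ) → (Fin d → ℝ))
    (hFh : ∀ z, Fh z = (fun i => ∑ j, (M i j : ℝ) * z j) + G z)
    (hGcont : Continuous G)
    (hGper : ∀ (z : Fin d → ℝ) (ν : Fin d → ℤ),
      G (z + fun i => (ν i : ℝ)) = G z)
    (m : ℤ) (hm : 1 < |m|)
    (v : Fin d → ℤ) (hv : v ≠ 0)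
    (hvleft : ∀ j, ∑ i, v i * M i j = m * v j)
    -- k = min{|v·x| : x ∈ ℤ^d, v·x ≠ 0}
    (k : ℤ)
    (hk : IsLeast {n : ℤ | ∃ x : Fin d → ℤ,
      n = |∑ i, v i * x i| ∧ (∑ i, v i * x i) ≠ 0} k)
    -- Φ̂(z) = k⁻¹ lim_{n→∞} m⁻ⁿ v·F̂ⁿ(z), which exists and is continuous
    (Φh : (Fin d → ℝ) → ℝ)
    (hΦlim : ∀ z, Tendsto
      (fun n : ℕ => ((m : ℝ) ^ n)⁻¹ * ∑ i, (v i : ℝ) * (Fh^[n] z) i)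
      atTop (nhds ((k : ℝ) * Φh z)))
    (hΦcont : Continuous Φh) :
    (∀ (x₀ : ℝ) (z₀ : Fin d → ℝ),
      ∃ t : ℝ, Φh (z₀ + t • fun i => (v i : ℝ)) = x₀) ∧
    Function.Surjective Φh := by
  classical
  have hmne : m ≠ 0 := by intro h; simp [h] at hm
  have hm0R : (m : ℝ) ≠ 0 := by exact_mod_cast hmne
  -- k ≥ 1
  have hk1 : 1 ≤ k := by
    obtain ⟨x, hx, hx0⟩ := hk.1
    rw [hx]
    exact Int.one_le_abs hx0
  have hk0 : (k : ℝ) ≠ 0 := by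
    have : k ≠ 0 := by omega
    exact_mod_cast this
  have hkpos : (0 : ℝ) < (k : ℝ) := by exact_mod_cast hk1
  -- Step A: translation by an integer vector
  have stepA : ∀ (z : Fin d → ℝ) (ν : Fin d → ℤ),
      Fh (z + fun i => (ν i : ℝ)) =
        Fh z + fun i => ((∑ j, M i j * ν j : ℤ) : ℝ) := by
    intro z ν
    funext i
    have hG := hGper z ν
    simp only [hFh, Pi.add_apply, hG]
    push_cast
    rw [show (∑ j, (M i j : ℝ) * (z j + (ν j : ℝ)))
        = (∑ j, (M i j : ℝ) * z j) + ∑ j, (M i j : ℝ) * (ν j : ℝ) from by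
      rw [← Finset.sum_add_distrib]
      exact Finset.sum_congr rfl fun j _ => by ring]
    ring
  -- Step B: iterates translate by integer vectors
  have stepB : ∀ (n : ℕ) (z : Fin d → ℝ) (ν : Fin d → ℤ),
      ∃ ν' : Fin d → ℤ,
        Fh^[n] (z + fun i => (ν i : ℝ)) = Fh^[n] z + (fun i => (ν' i : ℝ)) ∧
        ∑ i, v i * ν' i = m ^ n * ∑ i, v i * ν i := by
    intro n
    induction n with
    | zero => exact fun z ν => ⟨ν, by simp, by simp⟩
    | succ n ih =>
      intro z ν
      obtain ⟨ν', h1, h2⟩ := ih z ν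
      refine ⟨fun i => ∑ j, M i j * ν' j, ?_, ?_⟩
      · rw [Function.iterate_succ_apply', Function.iterate_succ_apply', h1, stepA]
      · have hsw : ∑ i, v i * ∑ j, M i j * ν' j = m * ∑ i, v i * ν' i := by
          simp only [Finset.mul_sum]
          rw [Finset.sum_comm]
          refine Finset.sum_congr rfl fun j _ => ?_
          calc ∑ i, v i * (M i j * ν' j) = (∑ i, v i * M i j) * ν' j := by
                rw [Finset.sum_mul]
                exact Finset.sum_congr rfl fun i _ => (mul_assoc _ _ _).symm
            _ = m * (v j * ν' j) := by rw [hvleft j]; ring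
        rw [hsw, h2]; ring
  -- Key: Φh translates by (v·ν)/k under integer translations
  have key : ∀ (z : Fin d → ℝ) (ν : Fin d → ℤ),
      Φh (z + fun i => (ν i : ℝ)) =
        Φh z + (∑ i, (v i : ℝ) * (ν i : ℝ)) / k := by
    intro z ν
    have h1 : Tendsto
        (fun n : ℕ => ((m : ℝ) ^ n)⁻¹ *
          ∑ i, (v i : ℝ) * (Fh^[n] (z + fun i => (ν i : ℝ))) i)
        atTop (nhds ((k : ℝ) * Φh z + ∑ i, (v i : ℝ) * (ν i : ℝ))) := by
      have heq : ∀ n : ℕ, ((m : ℝ) ^ n)⁻¹ *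
            ∑ i, (v i : ℝ) * (Fh^[n] (z + fun i => (ν i : ℝ))) i
          = ((m : ℝ) ^ n)⁻¹ * (∑ i, (v i : ℝ) * (Fh^[n] z) i)
            + ∑ i, (v i : ℝ) * (ν i : ℝ) := by
        intro n
        obtain ⟨ν', hB1, hB2⟩ := stepB n z ν
        rw [hB1]
        have hsplit : ∑ i, (v i : ℝ) * ((Fh^[n] z) i + (ν' i : ℝ))
            = (∑ i, (v i : ℝ) * (Fh^[n] z) i) + ∑ i, (v i : ℝ) * (ν' i : ℝ) := by
          rw [← Finset.sum_add_distrib]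
          exact Finset.sum_congr rfl fun i _ => by ring
        simp only [Pi.add_apply]
        rw [hsplit]
        have h2' : (∑ i, (v i : ℝ) * (ν' i : ℝ))
            = (m : ℝ) ^ n * ∑ i, (v i : ℝ) * (ν i : ℝ) := by
          exact_mod_cast congrArg (Int.cast : ℤ → ℝ) hB2
        rw [h2', mul_add, inv_mul_cancel_left₀ (pow_ne_zero n hm0R)]
      simp only [heq]
      exact (hΦlim z).add_const _
    have h2 := hΦlim (z + fun i => (ν i : ℝ))
    have huniq := tendsto_nhds_unique h2 h1
    apply mul_left_cancel₀ hk0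
    rw [huniq, mul_add, mul_div_cancel₀ _ hk0]
  -- the sum of squares of v is positive
  have hSpos : (0 : ℝ) < ∑ i, (v i : ℝ) * (v i : ℝ) := by
    obtain ⟨i0, hi0⟩ : ∃ i, v i ≠ 0 := by
      by_contra h
      push_neg at h
      exact hv (funext h)
    refine Finset.sum_pos' (fun i _ => mul_self_nonneg _) ⟨i0, Finset.mem_univ _, ?_⟩
    have : (v i0 : ℝ) ≠ 0 := by exact_mod_cast hi0
    exact mul_self_pos.2 this
  set S : ℝ := ∑ i, (v i : ℝ) * (v i : ℝ) with hS
  set c : ℝ := S / k with hc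
  have hcpos : 0 < c := div_pos hSpos hkpos
  -- main part
  have main : ∀ (x₀ : ℝ) (z₀ : Fin d → ℝ),
      ∃ t : ℝ, Φh (z₀ + t • fun i => (v i : ℝ)) = x₀ := by
    intro x₀ z₀
    set f : ℝ → ℝ := fun t => Φh (z₀ + t • fun i => (v i : ℝ)) with hf
    have hfcont : Continuous f := by
      apply hΦcont.comp
      exact continuous_const.add (continuous_id.smul continuous_const)
    have fval : ∀ n : ℤ, f (n : ℝ) = f 0 + n * c := by
      intro n
      have harg : z₀ + (n : ℝ) • (fun i => (v i : ℝ))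
          = (z₀ + (0 : ℝ) • fun i => (v i : ℝ)) + fun i => ((n * v i : ℤ) : ℝ) := by
        funext i
        simp only [Pi.add_apply, Pi.smul_apply, smul_eq_mul]
        push_cast
        ring
      have hsum : (∑ i, (v i : ℝ) * ((n * v i : ℤ) : ℝ)) = n * S := by
        rw [hS, Finset.mul_sum]
        exact Finset.sum_congr rfl fun i _ => by push_cast; ring
      rw [hf]
      simp only
      rw [harg, key, hsum, hc]
      ring
    -- choose N with f(-N) ≤ x₀ ≤ f(N)
    obtain ⟨N, hN⟩ := exists_nat_ge ((|x₀ - f 0|) / c)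
    have hNc : |x₀ - f 0| ≤ (N : ℝ) * c := by
      rw [div_le_iff₀ hcpos] at hN
      linarith
    have hup : x₀ ≤ f (N : ℝ) := by
      have := fval (N : ℤ)
      push_cast at this
      have h1 : x₀ - f 0 ≤ |x₀ - f 0| := le_abs_self _
      linarith
    have hlo : f ((-N : ℤ) : ℝ) ≤ x₀ := by
      have := fval (-N : ℤ)
      push_cast at this ⊢
      have h1 : -(x₀ - f 0) ≤ |x₀ - f 0| := neg_le_abs _
      linarith
    have hle : ((-N : ℤ) : ℝ) ≤ (N : ℝ) := by push_cast; linarith [Nat.cast_nonneg (α := ℝ) N]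
    have hx₀mem : x₀ ∈ Set.Icc (f ((-N : ℤ) : ℝ)) (f (N : ℝ)) := ⟨hlo, hup⟩
    have := intermediate_value_Icc hle hfcont.continuousOn hx₀mem
    obtain ⟨t, _, ht⟩ := this
    exact ⟨t, ht⟩
  refine ⟨main, fun x₀ => ?_⟩
  obtain ⟨t, ht⟩ := main x₀ 0
  exact ⟨0 + t • fun i => (v i : ℝ), ht⟩
end
end

section
/- (Claim A) Suppose in addition that F̂ is C¹ and has a (K,α)-expanding cone system with respect to a unit vector w and the subspace W := {u ∈ ℝ^d : v·u = 0}. If z₁ ≠ z₂ and Φ̂(z₁) = Φ̂(z₂), then z₁ and z₂ cannot be connected by a horizontal curve: there is no C¹ curve γ: [0,1] → ℝ^d with γ(0) = z₁, γ(1) = z₂, γ'(t) ≠ 0 for all t, and γ'(t) lying in the cone C_α for all t. -/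
open Filter Topology Set

noncomputable section

/-- Action of an integer matrix on ℝ^d. -/
def mulVecR {d : ℕ} (M : Matrix (Fin d) (Fin d) ℤ) (z : E d) : E d :=
  WithLp.toLp 2 (fun i => ∑ j, (M i j : ℝ) * z j)

/-- The cone C_α = {a•w + b : b ∈ W, |b| ≤ α|a|}. -/
def Cone {d : ℕ} (w : E d) (W : Set (E d)) (α : ℝ) : Set (E d) :=
  {u | ∃ (a : ℝ) (b : E d), b ∈ W ∧ u = a • w + b ∧ ‖b‖ ≤ α * |a|}

/-- F̂ has a (K,α)-expanding cone system with respect to the unit vector w and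
the subspace (set) W. -/
def HasConeSystem {d : ℕ} (Fh : E d → E d) (w : E d) (W : Set (E d)) (K α : ℝ) : Prop :=
  1 < K ∧ 0 < α ∧
  (∀ u : E d, ∃! ab : ℝ × E d, ab.2 ∈ W ∧ u = ab.1 • w + ab.2) ∧
  (∀ (z : E d) (a : ℝ) (b : E d) (a' : ℝ) (b' : E d), b ∈ W → b' ∈ W →
      fderiv ℝ Fh z (a • w + b) = a' • w + b' → ‖b‖ ≤ α * |a| →
      ‖b'‖ < α * |a'| ∧ K * |a| < |a'|) ∧
  (∀ (z : E d) (a : ℝ) (b : E d), b ∈ W → α * |a| < ‖b‖ →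
      ‖fderiv ℝ Fh z (a • w + b)‖ < K * ‖a • w + b‖)

/-- **Claim A.** Two distinct points in the same fiber of Φ̂ cannot be joined
by a C¹ horizontal curve (a curve with nonvanishing derivative lying in the
cone C_α). -/
theorem no_horizontal_curve_in_fiber
    (d : ℕ)
    (M : Matrix (Fin d) (Fin d) ℤ) (G : E d → E d) (Fh : E d → E d)
    (hFh : ∀ z, Fh z = mulVecR M z + G z)
    (hGC1 : ContDiff ℝ 1 G)
    (hGper : ∀ (z : E d) (ν : Fin d → ℤ), G (z + intCast ν) = G z)
    (m : ℤ) (hm : 1 < |m|)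
    (v : Fin d → ℤ) (hv : v ≠ 0)
    (hvleft : ∀ j, ∑ i, v i * M i j = m * v j)
    -- k = min{|v·x| : x ∈ ℤ^d, v·x ≠ 0}
    (k : ℤ)
    (hk : IsLeast {n : ℤ | ∃ x : Fin d → ℤ,
      n = |∑ i, v i * x i| ∧ (∑ i, v i * x i) ≠ 0} k)
    -- Φ̂(z) = k⁻¹ lim_{n→∞} m⁻ⁿ v·F̂ⁿ(z), which exists and is continuous
    (Φh : E d → ℝ)
    (hΦlim : ∀ z, Filter.Tendsto
      (fun n : ℕ => ((m : ℝ) ^ n)⁻¹ * ∑ i, (v i : ℝ) * (Fh^[n] z) i)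
      Filter.atTop (nhds ((k : ℝ) * Φh z)))
    (hΦcont : Continuous Φh)
    -- the (K,α)-expanding cone system w.r.t. a unit vector w ∉ W, W = {u : v·u = 0}
    (w : E d) (hw : ‖w‖ = 1)
    (hwW : w ∉ {u : E d | ∑ i, (v i : ℝ) * u i = 0})
    (K α : ℝ)
    (hcone : HasConeSystem Fh w {u : E d | ∑ i, (v i : ℝ) * u i = 0} K α)
    (z₁ z₂ : E d) (hne : z₁ ≠ z₂) (hfib : Φh z₁ = Φh z₂) :
    ¬ ∃ γ : ℝ → E d, ContDiffOn ℝ 1 γ (Set.Icc 0 1) ∧ γ 0 = z₁ ∧ γ 1 = z₂ ∧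
        ∀ t ∈ Set.Icc (0:ℝ) 1,
          derivWithin γ (Set.Icc 0 1) t ≠ 0 ∧
          derivWithin γ (Set.Icc 0 1) t ∈
            Cone w {u : E d | ∑ i, (v i : ℝ) * u i = 0} α := by
  rintro ⟨γ, hγC1, hγ0, hγ1, hγ'⟩
  obtain ⟨hK, hα, hdecomp, hexp, -⟩ := hcone
  have hK0 : (0:ℝ) < K := lt_trans one_pos hK
  -- the linear functional L = v·
  set L : E d →L[ℝ] ℝ := ∑ i, (v i : ℝ) • EuclideanSpace.proj i with hLdef
  have hL : ∀ u : E d, L u = ∑ i, (v i : ℝ) * u i := by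
    intro u
    simp [hLdef, ContinuousLinearMap.sum_apply, smul_eq_mul]
  have hLw : L w ≠ 0 := by
    rw [hL]; exact hwW
  -- basic facts about m
  have hmR : (1:ℝ) < |(m:ℝ)| := by
    rw [← Int.cast_abs]; exact_mod_cast hm
  have hm0 : ((m:ℝ)) ≠ 0 := by
    intro h
    rw [h, abs_zero] at hmR
    linarith
  have hmabs0 : (0:ℝ) < |(m:ℝ)| := lt_trans one_pos hmR
  -- F̂ is C¹
  have hFhC1 : ContDiff ℝ 1 Fh := by
    have h1 : ContDiff ℝ 1 (fun z : E d => mulVecR M z) := by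
      rw [contDiff_euclidean]
      intro i
      simp only [mulVecR]
      exact ContDiff.sum fun j _ =>
        contDiff_const.mul (by fun_prop)
    have h2 : Fh = fun z => mulVecR M z + G z := funext hFh
    rw [h2]
    exact h1.add hGC1
  have hFdiff : ∀ z, DifferentiableAt ℝ Fh z := fun z =>
    hFhC1.differentiable one_ne_zero z
  have hFit : ∀ n, ContDiff ℝ 1 (Fh^[n]) := by
    intro n
    induction n with
    | zero => simpa using contDiff_id
    | succ n ih => rw [Function.iterate_succ'] ; exact hFhC1.comp ih
  have hUD : UniqueDiffOn ℝ (Set.Icc (0:ℝ) 1) := uniqueDiffOn_Icc one_pos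
  have hγdiff : ∀ t ∈ Set.Icc (0:ℝ) 1,
      HasDerivWithinAt γ (derivWithin γ (Set.Icc 0 1) t) (Set.Icc 0 1) t :=
    fun t ht => ((hγC1.differentiableOn one_ne_zero) t ht).hasDerivWithinAt
  -- the sequence of derivatives along the iterated curve
  set D : ℝ → ℕ → E d := fun t n => Nat.rec (derivWithin γ (Set.Icc 0 1) t)
    (fun n dn => fderiv ℝ Fh (Fh^[n] (γ t)) dn) n with hDdef
  have hD0 : ∀ t, D t 0 = derivWithin γ (Set.Icc 0 1) t := fun _ => rfl
  have hDs : ∀ t n, D t (n+1) = fderiv ℝ Fh (Fh^[n] (γ t)) (D t n) := fun _ _ => rfl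
  -- main induction: derivative identification, cone membership, expansion
  have main : ∀ n, ∀ t ∈ Set.Icc (0:ℝ) 1,
      HasDerivWithinAt (fun s => Fh^[n] (γ s)) (D t n) (Set.Icc 0 1) t ∧
      (∃ a b, (b ∈ {u : E d | ∑ i, (v i : ℝ) * u i = 0}) ∧ D t n = a • w + b ∧
        ‖b‖ ≤ α * |a|) ∧
      K ^ n * |L (D t 0)| ≤ |L (D t n)| := by
    intro n
    induction n with
    | zero =>
      intro t ht
      refine ⟨hγdiff t ht, ?_, by simp⟩
      obtain ⟨a, b, hbW, hab, hb⟩ := (hγ' t ht).2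
      exact ⟨a, b, hbW, by rw [hD0]; exact hab, hb⟩
    | succ n ih =>
      intro t ht
      obtain ⟨hd, ⟨a, b, hbW, hab, hb⟩, hgrow⟩ := ih t ht
      have hd' : HasDerivWithinAt (fun s => Fh^[n+1] (γ s)) (D t (n+1))
          (Set.Icc 0 1) t := by
        have h1 : HasFDerivAt Fh (fderiv ℝ Fh (Fh^[n] (γ t))) (Fh^[n] (γ t)) :=
          (hFdiff _).hasFDerivAt
        have h2 := h1.comp_hasDerivWithinAt t hd
        rw [hDs]
        simpa [Function.comp_def, Function.iterate_succ_apply'] using h2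
      obtain ⟨⟨a', b'⟩, ⟨hb'W, hab'⟩, -⟩ := hdecomp (D t (n+1))
      have heq : fderiv ℝ Fh (Fh^[n] (γ t)) (a • w + b) = a' • w + b' := by
        rw [← hab, ← hDs, hab']
      obtain ⟨hb'cone, hexp'⟩ := hexp (Fh^[n] (γ t)) a b a' b' hbW hb'W heq hb
      have hLb : L b = 0 := by rw [hL]; exact hbW
      have hLb' : L b' = 0 := by rw [hL]; exact hb'W
      have hLn : L (D t n) = a * L w := by
        rw [hab, map_add, map_smul, hLb, smul_eq_mul, add_zero]
      have hLn' : L (D t (n+1)) = a' * L w := by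
        rw [hab', map_add, map_smul, hLb', smul_eq_mul, add_zero]
      refine ⟨hd', ⟨a', b', hb'W, hab', le_of_lt hb'cone⟩, ?_⟩
      have h3 : K ^ (n+1) * |L (D t 0)| ≤ K * |L (D t n)| := by
        rw [pow_succ, mul_comm (K^n), mul_assoc]
        exact mul_le_mul_of_nonneg_left hgrow (le_of_lt hK0)
      refine h3.trans ?_
      rw [hLn, hLn', abs_mul, abs_mul, ← mul_assoc]
      exact mul_le_mul_of_nonneg_right (le_of_lt hexp') (abs_nonneg _)
  -- identification of derivWithin with D
  have hDW : ∀ n, ∀ t ∈ Set.Icc (0:ℝ) 1,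
      derivWithin (fun s => Fh^[n] (γ s)) (Set.Icc 0 1) t = D t n :=
    fun n t ht => ((main n t ht).1).derivWithin (hUD t ht)
  -- continuity of the derivative functionals
  set g : ℕ → ℝ → ℝ :=
    fun n t => L (derivWithin (fun s => Fh^[n] (γ s)) (Set.Icc 0 1) t) with hgdef
  have hgcont : ∀ n, ContinuousOn (g n) (Set.Icc 0 1) := by
    intro n
    have h1 : ContDiffOn ℝ 1 (fun s => Fh^[n] (γ s)) (Set.Icc 0 1) :=
      (hFit n).comp_contDiffOn hγC1
    exact L.continuous.comp_continuousOn (h1.continuousOn_derivWithin hUD le_rfl)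
  have hgD : ∀ n, ∀ t ∈ Set.Icc (0:ℝ) 1, g n t = L (D t n) := by
    intro n t ht; rw [hgdef]; simp only []; rw [hDW n t ht]
  -- the initial derivative functional never vanishes
  have hg0ne : ∀ t ∈ Set.Icc (0:ℝ) 1, L (D t 0) ≠ 0 := by
    intro t ht
    obtain ⟨a, b, hbW, hab, hb⟩ := (hγ' t ht).2
    have hLb : L b = 0 := by rw [hL]; exact hbW
    have ha : a ≠ 0 := by
      intro h
      rw [h] at hb
      simp only [abs_zero, mul_zero] at hb
      have hb0 : b = 0 := norm_le_zero_iff.mp hb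
      exact (hγ' t ht).1 (by rw [hab, h, hb0]; simp)
    rw [hD0, hab, map_add, map_smul, hLb, smul_eq_mul, add_zero]
    exact mul_ne_zero ha hLw
  -- a positive lower bound δ for |L (D t 0)| on [0,1]
  obtain ⟨t₀, ht₀, hmin⟩ := (isCompact_Icc (a := (0:ℝ)) (b := 1)).exists_isMinOn
    (nonempty_Icc.mpr zero_le_one)
    ((hgcont 0).abs)
  set δ : ℝ := |g 0 t₀| with hδdef
  have hδpos : 0 < δ := by
    rw [hδdef]
    have := hg0ne t₀ ht₀
    rw [← hgD 0 t₀ ht₀] at this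
    exact abs_pos.mpr this
  have hδle : ∀ t ∈ Set.Icc (0:ℝ) 1, δ ≤ |g 0 t| := fun t ht => isMinOn_iff.mp hmin t ht
  -- lower bound for |g n t|
  have hgn_ge : ∀ n, ∀ t ∈ Set.Icc (0:ℝ) 1, K ^ n * δ ≤ |g n t| := by
    intro n t ht
    have h1 := (main n t ht).2.2
    rw [hgD n t ht]
    calc K ^ n * δ ≤ K ^ n * |g 0 t| :=
          mul_le_mul_of_nonneg_left (hδle t ht) (le_of_lt (pow_pos hK0 n))
      _ = K ^ n * |L (D t 0)| := by rw [hgD 0 t ht]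
      _ ≤ |L (D t n)| := h1
  -- sign constancy lemma
  have signlem : ∀ (h : ℝ → ℝ) (c : ℝ), 0 < c → ContinuousOn h (Set.Icc 0 1) →
      (∀ t ∈ Set.Icc (0:ℝ) 1, c ≤ |h t|) →
      (∀ t ∈ Set.Icc (0:ℝ) 1, c ≤ h t) ∨ (∀ t ∈ Set.Icc (0:ℝ) 1, h t ≤ -c) := by
    intro h c hc hcont habs
    have h0mem : (0:ℝ) ∈ Set.Icc (0:ℝ) 1 := by norm_num
    have key : ∀ t ∈ Set.Icc (0:ℝ) 1, ∀ s ∈ Set.Icc (0:ℝ) 1,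
        c ≤ h t → h s ≤ -c → False := by
      intro t ht s hs h1 h2
      have hsub : uIcc t s ⊆ Set.Icc (0:ℝ) 1 := uIcc_subset_Icc ht hs
      have hcont' : ContinuousOn h (uIcc t s) := hcont.mono hsub
      have h0' : (0:ℝ) ∈ uIcc (h t) (h s) := by
        rw [Set.mem_uIcc]
        right
        constructor <;> linarith
      obtain ⟨r, hr, hr0⟩ := intermediate_value_uIcc hcont' h0'
      have := habs r (hsub hr)
      rw [hr0] at this
      simp only [abs_zero] at this
      linarith
    rcases le_or_gt c (h 0) with h1 | h1
    · left
      intro t ht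
      by_contra hlt
      push_neg at hlt
      have : h t ≤ -c := by
        rcases abs_cases (h t) with ⟨he, _⟩ | ⟨he, _⟩
        · exfalso; have := habs t ht; rw [he] at this; linarith
        · have := habs t ht; rw [he] at this; linarith
      exact key 0 h0mem t ht h1 this
    · right
      intro t ht
      have h0' : h 0 ≤ -c := by
        rcases abs_cases (h 0) with ⟨he, _⟩ | ⟨he, _⟩
        · exfalso; have := habs 0 h0mem; rw [he] at this; linarith
        · have := habs 0 h0mem; rw [he] at this; linarith
      by_contra hlt
      push_neg at hlt
      have : c ≤ h t := by
        rcases abs_cases (h t) with ⟨he, _⟩ | ⟨he, _⟩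
        · have := habs t ht; rw [he] at this; linarith
        · exfalso; have := habs t ht; rw [he] at this; linarith
      exact key t ht 0 h0mem this h0'
  -- quantitative mean value lemma
  have mvtlem : ∀ (f h : ℝ → ℝ) (c : ℝ),
      (∀ t ∈ Set.Icc (0:ℝ) 1, HasDerivWithinAt f (h t) (Set.Icc 0 1) t) →
      (∀ t ∈ Set.Icc (0:ℝ) 1, c ≤ h t) → c ≤ f 1 - f 0 := by
    intro f h c hder hge
    have hfc : ContinuousOn f (Set.Icc 0 1) := fun t ht =>
      (hder t ht).continuousWithinAt
    have hint : interior (Set.Icc (0:ℝ) 1) = Set.Ioo 0 1 := interior_Icc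
    have hfd : ∀ x ∈ Set.Ioo (0:ℝ) 1, HasDerivAt f (h x) x := by
      intro x hx
      exact (hder x (Set.Ioo_subset_Icc_self hx)).hasDerivAt
        (Icc_mem_nhds hx.1 hx.2)
    have h1 := (convex_Icc (0:ℝ) 1).mul_sub_le_image_sub_of_le_deriv hfc
      (by rw [hint]; exact fun x hx => (hfd x hx).differentiableAt.differentiableWithinAt)
      (C := c)
      (by rw [hint]; intro x hx; rw [(hfd x hx).deriv]
          exact hge x (Set.Ioo_subset_Icc_self hx))
      0 (by norm_num) 1 (by norm_num) zero_le_one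
    simpa using h1
  -- the curve functionals fₙ
  have hfn : ∀ n, K ^ n * δ ≤ |L (Fh^[n] z₂) - L (Fh^[n] z₁)| := by
    intro n
    set f : ℝ → ℝ := fun t => L (Fh^[n] (γ t)) with hfdef
    have hder : ∀ t ∈ Set.Icc (0:ℝ) 1, HasDerivWithinAt f (g n t) (Set.Icc 0 1) t := by
      intro t ht
      have h1 := L.hasFDerivAt.comp_hasDerivWithinAt t (main n t ht).1
      rw [hgD n t ht]
      exact h1
    have habs := hgn_ge n
    have hc : 0 < K ^ n * δ := mul_pos (pow_pos hK0 n) hδpos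
    rcases signlem (g n) (K ^ n * δ) hc (hgcont n) habs with hpos | hneg
    · have := mvtlem f (g n) (K ^ n * δ) hder hpos
      rw [hfdef] at this
      simp only [hγ0, hγ1] at this
      calc K ^ n * δ ≤ L (Fh^[n] z₂) - L (Fh^[n] z₁) := this
        _ ≤ |L (Fh^[n] z₂) - L (Fh^[n] z₁)| := le_abs_self _
    · have hder' : ∀ t ∈ Set.Icc (0:ℝ) 1,
          HasDerivWithinAt (fun t => -f t) (-(g n t)) (Set.Icc 0 1) t :=
        fun t ht => (hder t ht).neg
      have hge' : ∀ t ∈ Set.Icc (0:ℝ) 1, K ^ n * δ ≤ -(g n t) := by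
        intro t ht; linarith [hneg t ht]
      have := mvtlem (fun t => -f t) (fun t => -(g n t)) (K ^ n * δ) hder' hge'
      simp only [hfdef, hγ0, hγ1] at this
      calc K ^ n * δ ≤ L (Fh^[n] z₁) - L (Fh^[n] z₂) := by linarith
        _ ≤ |L (Fh^[n] z₂) - L (Fh^[n] z₁)| := by
            rw [abs_sub_comm]; exact le_abs_self _
  -- boundedness of L ∘ G
  have hRnn : (0:ℝ) ≤ Real.sqrt d := Real.sqrt_nonneg _
  obtain ⟨y₀, hy₀, hmax⟩ := (isCompact_closedBall (0 : E d) (Real.sqrt d)).exists_isMaxOn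
    ⟨0, Metric.mem_closedBall_self hRnn⟩
    ((L.continuous.comp hGC1.continuous).abs.continuousOn)
  set C : ℝ := |L (G y₀)| with hCdef
  have hC0 : 0 ≤ C := abs_nonneg _
  have hC : ∀ z : E d, |L (G z)| ≤ C := by
    intro z
    set ν : Fin d → ℤ := fun i => ⌊z i⌋ with hνdef
    set y : E d := z - intCast ν with hydef
    have hy : G z = G y := by
      rw [← hGper y ν]
      congr 1
      rw [hydef]
      simp
    have hyball : y ∈ Metric.closedBall (0 : E d) (Real.sqrt d) := by
      rw [mem_closedBall_zero_iff]
      rw [EuclideanSpace.norm_eq]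
      apply Real.sqrt_le_sqrt
      have h1 : ∀ i, ‖y i‖ ^ 2 ≤ 1 := by
        intro i
        have hyi : y i = Int.fract (z i) := by
          rw [hydef]
          simp [intCast, Int.fract, hνdef, sub_eq_add_neg]
        rw [hyi, Real.norm_eq_abs, abs_of_nonneg (Int.fract_nonneg _), sq_le_one_iff_abs_le_one,
          abs_of_nonneg (Int.fract_nonneg _)]
        exact le_of_lt (Int.fract_lt_one _)
      calc ∑ i, ‖y i‖ ^ 2 ≤ ∑ _i : Fin d, (1:ℝ) := Finset.sum_le_sum fun i _ => h1 i
        _ = d := by simp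
    rw [hy]
    exact hmax hyball
  -- the cocycle relation
  have hMlin : ∀ z : E d, L (mulVecR M z) = (m:ℝ) * L z := by
    intro z
    rw [hL, hL]
    simp only [mulVecR]
    calc ∑ i, (v i : ℝ) * ∑ j, (M i j : ℝ) * z j
        = ∑ i, ∑ j, (v i : ℝ) * (M i j : ℝ) * z j := by
          simp [Finset.mul_sum, mul_assoc]
      _ = ∑ j, ∑ i, (v i : ℝ) * (M i j : ℝ) * z j := Finset.sum_comm
      _ = ∑ j, (∑ i, (v i : ℝ) * (M i j : ℝ)) * z j := by
          simp [Finset.sum_mul]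
      _ = ∑ j, ((m : ℝ) * (v j : ℝ)) * z j := by
          refine Finset.sum_congr rfl fun j _ => ?_
          congr 1
          exact_mod_cast hvleft j
      _ = (m : ℝ) * ∑ j, (v j : ℝ) * z j := by
          simp [Finset.mul_sum, mul_assoc]
  have hstep : ∀ z : E d, L (Fh z) = (m:ℝ) * L z + L (G z) := by
    intro z
    rw [hFh z, map_add, hMlin]
  -- iterated bound
  have hiter : ∀ z : E d, ∀ n : ℕ,
      |L (Fh^[n] z) - (m:ℝ)^n * L z| ≤ C * ∑ j ∈ Finset.range n, |(m:ℝ)|^j := by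
    intro z n
    induction n with
    | zero => simp
    | succ n ih =>
      have h1 : L (Fh^[n+1] z) = (m:ℝ) * L (Fh^[n] z) + L (G (Fh^[n] z)) := by
        rw [Function.iterate_succ_apply']
        exact hstep _
      calc |L (Fh^[n+1] z) - (m:ℝ)^(n+1) * L z|
          = |(m:ℝ) * (L (Fh^[n] z) - (m:ℝ)^n * L z) + L (G (Fh^[n] z))| := by
            rw [h1]; ring_nf
        _ ≤ |(m:ℝ) * (L (Fh^[n] z) - (m:ℝ)^n * L z)| + |L (G (Fh^[n] z))| :=
            abs_add_le _ _
        _ ≤ |(m:ℝ)| * (C * ∑ j ∈ Finset.range n, |(m:ℝ)|^j) + C := by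
            rw [abs_mul]
            gcongr
            · exact hC _
        _ = C * ∑ j ∈ Finset.range (n+1), |(m:ℝ)|^j := by
            rw [geom_sum_succ]
            ring
  set C' : ℝ := C / (|(m:ℝ)| - 1) with hC'def
  have hC'0 : 0 ≤ C' := div_nonneg hC0 (by linarith)
  have hdiv : ∀ z : E d, ∀ n : ℕ,
      |((m:ℝ)^n)⁻¹ * L (Fh^[n] z) - L z| ≤ C' := by
    intro z n
    have h1 := hiter z n
    have h2 : (∑ j ∈ Finset.range n, |(m:ℝ)|^j) ≤ |(m:ℝ)|^n / (|(m:ℝ)| - 1) := by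
      rw [geom_sum_eq (by linarith : |(m:ℝ)| ≠ 1)]
      apply div_le_div_of_nonneg_right ?_ (by linarith)
      linarith
    have h3 : |((m:ℝ)^n)⁻¹ * L (Fh^[n] z) - L z|
        = (|(m:ℝ)|^n)⁻¹ * |L (Fh^[n] z) - (m:ℝ)^n * L z| := by
      rw [← abs_pow, ← abs_inv, ← abs_mul]
      congr 1
      field_simp
    rw [h3]
    have h4 : (|(m:ℝ)|^n)⁻¹ * |L (Fh^[n] z) - (m:ℝ)^n * L z|
        ≤ (|(m:ℝ)|^n)⁻¹ * (C * (|(m:ℝ)|^n / (|(m:ℝ)| - 1))) := by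
      apply mul_le_mul_of_nonneg_left _ (by positivity)
      exact h1.trans (by apply mul_le_mul_of_nonneg_left h2 hC0)
    refine h4.trans (le_of_eq ?_)
    rw [hC'def]
    field_simp
  -- rewrite hΦlim in terms of L
  have hΦlim' : ∀ z : E d, Tendsto (fun n : ℕ => ((m:ℝ)^n)⁻¹ * L (Fh^[n] z))
      atTop (𝓝 ((k:ℝ) * Φh z)) := by
    intro z
    have := hΦlim z
    simpa only [hL] using this
  -- bound on |kΦ - L|
  have hΦbound : ∀ z : E d, |(k:ℝ) * Φh z - L z| ≤ C' := by
    intro z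
    have h1 : Tendsto (fun n : ℕ => |((m:ℝ)^n)⁻¹ * L (Fh^[n] z) - L z|) atTop
        (𝓝 |(k:ℝ) * Φh z - L z|) :=
      ((hΦlim' z).sub tendsto_const_nhds).abs
    exact le_of_tendsto h1 (Filter.Eventually.of_forall fun n => hdiv z n)
  -- semiconjugacy
  have hΦF : ∀ z : E d, ∀ n : ℕ,
      (k:ℝ) * Φh (Fh^[n] z) = (m:ℝ)^n * ((k:ℝ) * Φh z) := by
    intro z n
    have h1 : Tendsto (fun N : ℕ => ((m:ℝ)^N)⁻¹ * L (Fh^[N] (Fh^[n] z))) atTop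
        (𝓝 ((k:ℝ) * Φh (Fh^[n] z))) := hΦlim' _
    have h3 : Tendsto (fun N : ℕ => ((m:ℝ)^(N+n))⁻¹ * L (Fh^[N+n] z)) atTop
        (𝓝 ((k:ℝ) * Φh z)) := (hΦlim' z).comp (tendsto_add_atTop_nat n)
    have h4 := h3.const_mul ((m:ℝ)^n)
    have h5 : (fun N : ℕ => (m:ℝ)^n * (((m:ℝ)^(N+n))⁻¹ * L (Fh^[N+n] z)))
        = fun N : ℕ => ((m:ℝ)^N)⁻¹ * L (Fh^[N] (Fh^[n] z)) := by
      funext N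
      rw [← Function.iterate_add_apply, pow_add]
      field_simp
    rw [h5] at h4
    exact tendsto_nhds_unique h1 h4
  -- final contradiction
  obtain ⟨n, hn⟩ := pow_unbounded_of_one_lt (2 * C' / δ) hK
  have hKn : 2 * C' < K ^ n * δ := by
    rw [div_lt_iff₀ hδpos] at hn
    linarith
  have hub : |L (Fh^[n] z₂) - L (Fh^[n] z₁)| ≤ 2 * C' := by
    have h1 := hΦbound (Fh^[n] z₁)
    have h2 := hΦbound (Fh^[n] z₂)
    have h3 : (k:ℝ) * Φh (Fh^[n] z₁) = (k:ℝ) * Φh (Fh^[n] z₂) := by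
      rw [hΦF z₁ n, hΦF z₂ n, hfib]
    calc |L (Fh^[n] z₂) - L (Fh^[n] z₁)|
        = |((k:ℝ) * Φh (Fh^[n] z₁) - L (Fh^[n] z₁))
            - ((k:ℝ) * Φh (Fh^[n] z₂) - L (Fh^[n] z₂))| := by
          rw [h3]; ring_nf
      _ ≤ |(k:ℝ) * Φh (Fh^[n] z₁) - L (Fh^[n] z₁)|
            + |(k:ℝ) * Φh (Fh^[n] z₂) - L (Fh^[n] z₂)| := abs_sub _ _
      _ ≤ 2 * C' := by linarith
  have := hfn n
  linarith
end
end

section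
/- (Empty parallelepipeds are unimodular) Let w₁, …, w_d ∈ ℤ^d be linearly independent integer vectors and let P := {t₁w₁ + ⋯ + t_d w_d : tᵢ ∈ [0,1] for all i} be the closed parallelepiped they span. If the only lattice points of ℤ^d contained in P are its vertices {Σ_{i∈S} wᵢ : S ⊆ {1,…,d}}, then |det(w₁, …, w_d)| = 1. -/
/-- **Empty parallelepipeds are unimodular.** If the closed parallelepiped
spanned by linearly independent integer vectors w₁, …, w_d contains no lattice
points other than its vertices Σ_{i∈S} wᵢ, then |det(w₁, …, w_d)| = 1. -/
theorem empty_parallelepiped_unimodular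
    (d : ℕ) (w : Fin d → Fin d → ℤ)
    (hind : LinearIndependent ℝ (fun i : Fin d => fun j : Fin d => (w i j : ℝ)))
    (hempty : ∀ x : Fin d → ℤ,
      (∃ t : Fin d → ℝ, (∀ i, t i ∈ Set.Icc (0 : ℝ) 1) ∧
        (fun j => (x j : ℝ)) = ∑ i, t i • fun j => (w i j : ℝ)) →
      ∃ S : Finset (Fin d), x = ∑ i ∈ S, w i) :
    (Matrix.of fun i j => w j i).det = 1 ∨ (Matrix.of fun i j => w j i).det = -1 := by
  rcases Nat.eq_zero_or_pos d with hd | hd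
  · subst hd
    left
    exact Matrix.det_isEmpty
  have : Nonempty (Fin d) := ⟨⟨0, hd⟩⟩
  set Wℝ : Fin d → Fin d → ℝ := fun i j => (w i j : ℝ) with hW
  have hcard : Fintype.card (Fin d) = Module.finrank ℝ (Fin d → ℝ) := by simp
  set B := basisOfLinearIndependentOfCardEqFinrank hind hcard with hB
  have hBcoe : ⇑B = Wℝ := coe_basisOfLinearIndependentOfCardEqFinrank hind hcard
  -- surjectivity of mulVec over ℤ
  have hsurj : Function.Surjective (Matrix.of fun i j => w j i).mulVec := by
    intro x
    set xℝ : Fin d → ℝ := fun j => (x j : ℝ) with hx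
    set t : Fin d → ℝ := fun i => B.repr xℝ i with ht
    have hrepr : ∑ i, t i • Wℝ i = xℝ := by
      conv_rhs => rw [← B.sum_repr xℝ]
      simp [hBcoe, ht]
    -- the point y with fractional coordinates
    set y : Fin d → ℤ := fun j => x j - ∑ i, ⌊t i⌋ * w i j with hy
    have hyr : (fun j => (y j : ℝ)) = ∑ i, Int.fract (t i) • Wℝ i := by
      funext j
      have := congrFun hrepr j
      simp only [Finset.sum_apply, Pi.smul_apply, smul_eq_mul] at this ⊢
      simp only [hy, Int.fract]
      push_cast
      have h2 : (x j : ℝ) = ∑ i, t i * Wℝ i j := this.symm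
      rw [h2]
      simp only [hW, sub_mul, Finset.sum_sub_distrib]
    obtain ⟨S, hS⟩ := hempty y ⟨fun i => Int.fract (t i),
      fun i => ⟨Int.fract_nonneg _, (Int.fract_lt_one _).le⟩, hyr⟩
    refine ⟨fun i => ⌊t i⌋ + (if i ∈ S then 1 else 0), ?_⟩
    funext j
    have hyj : y j = ∑ i ∈ S, w i j := by rw [hS]; simp
    simp only [Matrix.mulVec, dotProduct, Matrix.of_apply]
    have : x j = ∑ i, ⌊t i⌋ * w i j + ∑ i ∈ S, w i j := by
      have := hyj
      simp only [hy] at this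
      omega
    rw [this]
    simp only [mul_add, Finset.sum_add_distrib, mul_ite, mul_one, mul_zero]
    congr 1
    · exact Finset.sum_congr rfl fun i _ => mul_comm _ _
    · rw [Finset.sum_ite_mem, Finset.univ_inter]
  have hunit : IsUnit (Matrix.of fun i j => w j i) :=
    Matrix.mulVec_surjective_iff_isUnit.mp hsurj
  have := (Matrix.isUnit_iff_isUnit_det _).mp hunit
  rcases Int.isUnit_iff.mp this with h | h
  · exact Or.inl h
  · exact Or.inr h
end
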